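/- There do not exist c₂, c₅, c₆ ∈ ℂ and functions b₂, b₅, b₆, ψ₅, ψ₆ : ℂ → ℂ such that both of the following hold: (i) for all z ∈ ℂ: b₂(z)c₂ + b₅(z)c₅ + b₆(z)c₆ = φ₂(z), b₂(z)c₂² + b₅(z)c₅² + b₆(z)c₆² = 2φ₃(z), b₂(z)c₂³ + b₅(z)c₅³ + b₆(z)c₆³ = 6φ₄(z); and (ii) for all μ, ν ∈ ℂ: −c₂² b₂(μ) φ₂(c₂ν) + b₅(μ) ψ₅(ν) + b₆(μ) ψ₆(ν) = 0. -/

import Mathlib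

open Complex Filter intervalIntegral

/-- For `k ≥ 1`, `φ_k(z) = ∫_0^1 exp((1-θ)z) θ^(k-1)/(k-1)! dθ`; `φ_0(z) = exp z`. -/
noncomputable def phi : ℕ → ℂ → ℂ
  | 0 => fun z => Complex.exp z
  | (k + 1) => fun z =>
      ∫ θ in (0:ℝ)..1, Complex.exp ((1 - (θ : ℂ)) * z) * (θ : ℂ) ^ k / (Nat.factorial k : ℂ)

lemma phi_two_zero : phi 2 0 = 1/2 := by
  show (∫ θ in (0:ℝ)..1, Complex.exp ((1 - (θ : ℂ)) * 0) * (θ : ℂ) ^ 1 / (Nat.factorial 1 : ℂ)) = 1/2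
  have h : (∫ θ in (0:ℝ)..1, ((θ:ℝ):ℂ)) = ((∫ θ in (0:ℝ)..1, θ : ℝ) : ℂ) :=
    intervalIntegral.integral_ofReal
  simp only [mul_zero, Complex.exp_zero, one_mul, pow_one, Nat.factorial_one, Nat.cast_one, div_one]
  rw [h, integral_id]
  norm_num

lemma phi_two_eq {z : ℂ} (hz : z ≠ 0) :
    phi 2 z = (Complex.exp z - 1 - z) / z ^ 2 := by
  have hD : ∀ θ : ℝ, HasDerivAt
      (fun t : ℝ => -(Complex.exp ((1 - (t:ℂ)) * z) * ((t:ℂ)*z + 1)) / z^2)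
      (Complex.exp ((1 - (θ:ℂ)) * z) * (θ:ℂ) ^ 1 / (Nat.factorial 1 : ℂ)) θ := by
    intro θ
    have hG : HasDerivAt (fun w : ℂ => -(Complex.exp ((1 - w) * z) * (w*z + 1)) / z^2)
        (Complex.exp ((1 - (θ:ℂ)) * z) * (θ:ℂ) ^ 1 / (Nat.factorial 1 : ℂ)) (θ:ℝ) := by
      have h1 : HasDerivAt (fun w : ℂ => (1 - w) * z) ((-1) * z) (θ:ℂ) :=
        ((hasDerivAt_id (θ:ℂ)).const_sub 1).mul_const z
      have h2 := h1.cexp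
      have h3 := ((hasDerivAt_id (θ:ℂ)).mul_const z).add_const (1:ℂ)
      have := ((h2.mul h3).neg).div_const (z^2)
      refine this.congr_deriv ?_
      simp only [id, Pi.add_apply]
      field_simp [hz, Nat.factorial]
      ring
    exact hG.comp_ofReal
  have hint : IntervalIntegrable
      (fun θ : ℝ => Complex.exp ((1 - (θ:ℂ)) * z) * (θ:ℂ) ^ 1 / (Nat.factorial 1 : ℂ))
      MeasureTheory.volume 0 1 := by
    apply Continuous.intervalIntegrable; fun_prop
  have heq := intervalIntegral.integral_eq_sub_of_hasDerivAt (fun x _ => hD x) hint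
  show (∫ θ in (0:ℝ)..1, Complex.exp ((1 - (θ : ℂ)) * z) * (θ : ℂ) ^ 1 / (Nat.factorial 1 : ℂ)) = _
  rw [heq]
  push_cast
  simp only [sub_self, zero_mul, Complex.exp_zero, mul_zero, sub_zero, one_mul, zero_add]
  field_simp [hz, Nat.factorial]
  ring

lemma phi_three_eq {z : ℂ} (hz : z ≠ 0) :
    phi 3 z = (2*Complex.exp z - 2 - 2*z - z^2) / (2*z^3) := by
  have hD : ∀ θ : ℝ, HasDerivAt
      (fun t : ℝ => -(Complex.exp ((1 - (t:ℂ)) * z) * ((t:ℂ)^2*z^2 + 2*((t:ℂ)*z) + 2)) / (2*z^3))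
      (Complex.exp ((1 - (θ:ℂ)) * z) * (θ:ℂ) ^ 2 / (Nat.factorial 2 : ℂ)) θ := by
    intro θ
    have hG : HasDerivAt
        (fun w : ℂ => -(Complex.exp ((1 - w) * z) * (w^2*z^2 + 2*(w*z) + 2)) / (2*z^3))
        (Complex.exp ((1 - (θ:ℂ)) * z) * (θ:ℂ) ^ 2 / (Nat.factorial 2 : ℂ)) (θ:ℝ) := by
      have h1 : HasDerivAt (fun w : ℂ => (1 - w) * z) ((-1) * z) (θ:ℂ) :=
        ((hasDerivAt_id (θ:ℂ)).const_sub 1).mul_const z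
      have h2 := h1.cexp
      have h3 := (((hasDerivAt_pow 2 (θ:ℂ)).mul_const (z^2)).add
        (((hasDerivAt_id (θ:ℂ)).mul_const z).const_mul 2)).add_const (2:ℂ)
      have := ((h2.mul h3).neg).div_const (2*z^3)
      refine this.congr_deriv ?_
      simp only [id, Pi.add_apply]
      field_simp [hz, Nat.factorial]
      ring
    exact hG.comp_ofReal
  have hint : IntervalIntegrable
      (fun θ : ℝ => Complex.exp ((1 - (θ:ℂ)) * z) * (θ:ℂ) ^ 2 / (Nat.factorial 2 : ℂ))
      MeasureTheory.volume 0 1 := by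
    apply Continuous.intervalIntegrable; fun_prop
  have heq := intervalIntegral.integral_eq_sub_of_hasDerivAt (fun x _ => hD x) hint
  show (∫ θ in (0:ℝ)..1, Complex.exp ((1 - (θ : ℂ)) * z) * (θ : ℂ) ^ 2 / (Nat.factorial 2 : ℂ)) = _
  rw [heq]
  push_cast
  simp only [sub_self, zero_mul, Complex.exp_zero, mul_zero, sub_zero, one_mul, zero_add, one_pow,
    ne_eq, OfNat.ofNat_ne_zero, not_false_eq_true, zero_pow]
  field_simp [hz, Nat.factorial]
  ring

lemma phi_four_eq {z : ℂ} (hz : z ≠ 0) :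
    phi 4 z = (6*Complex.exp z - 6 - 6*z - 3*z^2 - z^3) / (6*z^4) := by
  have hD : ∀ θ : ℝ, HasDerivAt
      (fun t : ℝ => -(Complex.exp ((1 - (t:ℂ)) * z) * ((t:ℂ)^3*z^3 + 3*((t:ℂ)^2*z^2) + 6*((t:ℂ)*z) + 6)) / (6*z^4))
      (Complex.exp ((1 - (θ:ℂ)) * z) * (θ:ℂ) ^ 3 / (Nat.factorial 3 : ℂ)) θ := by
    intro θ
    have hG : HasDerivAt
        (fun w : ℂ => -(Complex.exp ((1 - w) * z) * (w^3*z^3 + 3*(w^2*z^2) + 6*(w*z) + 6)) / (6*z^4))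
        (Complex.exp ((1 - (θ:ℂ)) * z) * (θ:ℂ) ^ 3 / (Nat.factorial 3 : ℂ)) (θ:ℝ) := by
      have h1 : HasDerivAt (fun w : ℂ => (1 - w) * z) ((-1) * z) (θ:ℂ) :=
        ((hasDerivAt_id (θ:ℂ)).const_sub 1).mul_const z
      have h2 := h1.cexp
      have h3 := ((((hasDerivAt_pow 3 (θ:ℂ)).mul_const (z^3)).add
        (((hasDerivAt_pow 2 (θ:ℂ)).mul_const (z^2)).const_mul 3)).add
        (((hasDerivAt_id (θ:ℂ)).mul_const z).const_mul 6)).add_const (6:ℂ)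
      have := ((h2.mul h3).neg).div_const (6*z^4)
      refine this.congr_deriv ?_
      simp only [id, Pi.add_apply]
      field_simp [hz, Nat.factorial]
      ring
    exact hG.comp_ofReal
  have hint : IntervalIntegrable
      (fun θ : ℝ => Complex.exp ((1 - (θ:ℂ)) * z) * (θ:ℂ) ^ 3 / (Nat.factorial 3 : ℂ))
      MeasureTheory.volume 0 1 := by
    apply Continuous.intervalIntegrable; fun_prop
  have heq := intervalIntegral.integral_eq_sub_of_hasDerivAt (fun x _ => hD x) hint
  show (∫ θ in (0:ℝ)..1, Complex.exp ((1 - (θ : ℂ)) * z) * (θ : ℂ) ^ 3 / (Nat.factorial 3 : ℂ)) = _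
  rw [heq]
  push_cast
  simp only [sub_self, zero_mul, Complex.exp_zero, mul_zero, sub_zero, one_mul, zero_add, one_pow,
    ne_eq, OfNat.ofNat_ne_zero, not_false_eq_true, zero_pow]
  field_simp [hz, Nat.factorial]
  ring

lemma const_eq_zero_of_eventually (c : ℂ) (F : ℝ → ℂ)
    (hF : Tendsto F atTop (nhds 0)) (h : ∀ x : ℝ, 1 ≤ x → c = F x) : c = 0 := by
  have h1 : Tendsto (fun _ : ℝ => c) atTop (nhds 0) := by
    apply Tendsto.congr' _ hF
    filter_upwards [eventually_ge_atTop (1:ℝ)] with x hx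
    exact (h x hx).symm
  exact tendsto_nhds_unique tendsto_const_nhds h1

lemma ofReal_tendsto_zero {f : ℝ → ℝ} (h : Tendsto f atTop (nhds 0)) :
    Tendsto (fun x => ((f x : ℝ) : ℂ)) atTop (nhds 0) := by
  have := (Complex.continuous_ofReal.tendsto 0).comp h
  simpa [Function.comp_def] using this

lemma lin_indep (α β γ : ℂ)
    (h : ∀ z : ℂ, α * phi 2 z + β * (2 * phi 3 z) + γ * (6 * phi 4 z) = 0) :
    α = 0 ∧ β = 0 ∧ γ = 0 := by
  have key' : ∀ x : ℝ, 1 ≤ x →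
      (α * (x:ℂ)^2 + 2*β*(x:ℂ) + 6*γ)
        = (α*((x:ℂ)^2 + (x:ℂ)^3) + β*(2*(x:ℂ) + 2*(x:ℂ)^2 + (x:ℂ)^3)
          + γ*(6 + 6*(x:ℂ) + 3*(x:ℂ)^2 + (x:ℂ)^3)) * ((Real.exp (-x) : ℝ) : ℂ) := by
    intro x hx
    have hx0 : (x:ℂ) ≠ 0 := by
      simp only [ne_eq, Complex.ofReal_eq_zero]; intro h'; rw [h'] at hx; linarith
    have key : (α * (x:ℂ)^2 + 2*β*(x:ℂ) + 6*γ) * Complex.exp (x:ℂ)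
        = α*((x:ℂ)^2 + (x:ℂ)^3) + β*(2*(x:ℂ) + 2*(x:ℂ)^2 + (x:ℂ)^3)
          + γ*(6 + 6*(x:ℂ) + 3*(x:ℂ)^2 + (x:ℂ)^3) := by
      have h0 := h x
      rw [phi_two_eq hx0, phi_three_eq hx0, phi_four_eq hx0] at h0
      field_simp at h0
      apply mul_left_cancel₀ (show (12*(x:ℂ)^5) ≠ 0 from
        mul_ne_zero (by norm_num) (pow_ne_zero _ hx0))
      linear_combination 12*(x:ℂ)^5 * h0
    have he : ((Real.exp (-x) : ℝ) : ℂ) * Complex.exp (x:ℂ) = 1 := by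
      rw [Complex.ofReal_exp]
      push_cast
      rw [← Complex.exp_add]
      simp
    apply mul_right_cancel₀ (Complex.exp_ne_zero (x:ℂ))
    linear_combination key - (α*((x:ℂ)^2 + (x:ℂ)^3) + β*(2*(x:ℂ) + 2*(x:ℂ)^2 + (x:ℂ)^3)
      + γ*(6 + 6*(x:ℂ) + 3*(x:ℂ)^2 + (x:ℂ)^3)) * he
  -- real null sequences
  have npow : ∀ n : ℕ, Tendsto (fun x:ℝ => x^n * Real.exp (-x)) atTop (nhds 0) :=
    fun n => Real.tendsto_pow_mul_exp_neg_atTop_nhds_zero n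
  have nexp : Tendsto (fun x:ℝ => Real.exp (-x)) atTop (nhds 0) := by simpa using npow 0
  have nxexp : Tendsto (fun x:ℝ => x * Real.exp (-x)) atTop (nhds 0) := by simpa using npow 1
  have ninv : Tendsto (fun x:ℝ => x⁻¹) atTop (nhds 0) := tendsto_inv_atTop_zero
  -- step 1 : α = 0
  have hα : α = 0 := by
    apply const_eq_zero_of_eventually α (fun x : ℝ =>
      α * (((x^2+x^3)*Real.exp (-x)/x^2 : ℝ) : ℂ)
      + (β * ((((2*x+2*x^2+x^3)*Real.exp (-x) - 2*x)/x^2 : ℝ) : ℂ)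
        + γ * ((((6+6*x+3*x^2+x^3)*Real.exp (-x) - 6)/x^2 : ℝ) : ℂ)))
    · have t1 : Tendsto (fun x:ℝ => (x^2+x^3)*Real.exp (-x)/x^2) atTop (nhds 0) := by
        have base : Tendsto (fun x:ℝ => Real.exp (-x) + x*Real.exp (-x)) atTop (nhds 0) := by
          simpa using nexp.add nxexp
        apply Tendsto.congr' _ base
        filter_upwards [eventually_ge_atTop (1:ℝ)] with x hx
        have hx0 : x ≠ 0 := by linarith
        field_simp
      have t2 : Tendsto (fun x:ℝ => ((2*x+2*x^2+x^3)*Real.exp (-x) - 2*x)/x^2) atTop (nhds 0) := by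
        have base : Tendsto (fun x:ℝ => 2*(Real.exp (-x)*x⁻¹) + 2*Real.exp (-x) + x*Real.exp (-x)
            - 2*x⁻¹) atTop (nhds 0) := by
          have := ((((nexp.mul ninv).const_mul 2).add (nexp.const_mul 2)).add nxexp).sub
            (ninv.const_mul 2)
          simpa using this
        apply Tendsto.congr' _ base
        filter_upwards [eventually_ge_atTop (1:ℝ)] with x hx
        have hx0 : x ≠ 0 := by linarith
        field_simp
      have t3 : Tendsto (fun x:ℝ => ((6+6*x+3*x^2+x^3)*Real.exp (-x) - 6)/x^2) atTop (nhds 0) := by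
        have base : Tendsto (fun x:ℝ => 6*(Real.exp (-x)*(x⁻¹*x⁻¹)) + 6*(Real.exp (-x)*x⁻¹)
            + 3*Real.exp (-x) + x*Real.exp (-x) - 6*(x⁻¹*x⁻¹)) atTop (nhds 0) := by
          have := (((((nexp.mul (ninv.mul ninv)).const_mul 6).add
            ((nexp.mul ninv).const_mul 6)).add (nexp.const_mul 3)).add nxexp).sub
            ((ninv.mul ninv).const_mul 6)
          simpa using this
        apply Tendsto.congr' _ base
        filter_upwards [eventually_ge_atTop (1:ℝ)] with x hx
        have hx0 : x ≠ 0 := by linarith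
        field_simp
      have := ((ofReal_tendsto_zero t1).const_mul α).add
        (((ofReal_tendsto_zero t2).const_mul β).add ((ofReal_tendsto_zero t3).const_mul γ))
      simpa using this
    · intro x hx
      have hx0 : (x:ℂ) ≠ 0 := by
        simp only [ne_eq, Complex.ofReal_eq_zero]; intro h'; rw [h'] at hx; linarith
      have hx2 : (x:ℂ)^2 * ((x:ℂ)^2)⁻¹ = 1 := mul_inv_cancel₀ (pow_ne_zero 2 hx0)
      have k := key' x hx
      push_cast at k ⊢
      linear_combination ((x:ℂ)^2)⁻¹ * k + (-α) * hx2
  subst hα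
  -- step 2 : β = 0
  have hβ : β = 0 := by
    apply const_eq_zero_of_eventually β (fun x : ℝ =>
      β * (((2*x+2*x^2+x^3)*Real.exp (-x)/(2*x) : ℝ) : ℂ)
      + γ * ((((6+6*x+3*x^2+x^3)*Real.exp (-x) - 6)/(2*x) : ℝ) : ℂ))
    · have t2 : Tendsto (fun x:ℝ => (2*x+2*x^2+x^3)*Real.exp (-x)/(2*x)) atTop (nhds 0) := by
        have base : Tendsto (fun x:ℝ => Real.exp (-x) + x*Real.exp (-x) + x^2*Real.exp (-x)/2)
            atTop (nhds 0) := by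
          have := (nexp.add nxexp).add ((npow 2).div_const 2)
          simpa using this
        apply Tendsto.congr' _ base
        filter_upwards [eventually_ge_atTop (1:ℝ)] with x hx
        have hx0 : x ≠ 0 := by linarith
        field_simp
      have t3 : Tendsto (fun x:ℝ => ((6+6*x+3*x^2+x^3)*Real.exp (-x) - 6)/(2*x)) atTop (nhds 0) := by
        have base : Tendsto (fun x:ℝ => 3*(Real.exp (-x)*x⁻¹) + 3*Real.exp (-x)
            + 3*(x*Real.exp (-x))/2 + x^2*Real.exp (-x)/2 - 3*x⁻¹) atTop (nhds 0) := by
          have := (((((nexp.mul ninv).const_mul 3).add (nexp.const_mul 3)).add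
            ((nxexp.const_mul 3).div_const 2)).add ((npow 2).div_const 2)).sub
            (ninv.const_mul 3)
          simpa using this
        apply Tendsto.congr' _ base
        filter_upwards [eventually_ge_atTop (1:ℝ)] with x hx
        have hx0 : x ≠ 0 := by linarith
        field_simp
        ring
      have := ((ofReal_tendsto_zero t2).const_mul β).add ((ofReal_tendsto_zero t3).const_mul γ)
      simpa using this
    · intro x hx
      have hx0 : (x:ℂ) ≠ 0 := by
        simp only [ne_eq, Complex.ofReal_eq_zero]; intro h'; rw [h'] at hx; linarith
      have hx2 : (2*(x:ℂ)) * ((2*(x:ℂ)))⁻¹ = 1 :=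
        mul_inv_cancel₀ (mul_ne_zero two_ne_zero hx0)
      have k := key' x hx
      push_cast at k ⊢
      linear_combination ((2*(x:ℂ)))⁻¹ * k + (-β) * hx2
  subst hβ
  -- step 3 : γ = 0
  have hγ : γ = 0 := by
    apply const_eq_zero_of_eventually γ (fun x : ℝ =>
      γ * (((6+6*x+3*x^2+x^3)*Real.exp (-x)/6 : ℝ) : ℂ))
    · have base : Tendsto (fun x:ℝ => Real.exp (-x) + x*Real.exp (-x) + x^2*Real.exp (-x)/2
          + x^3*Real.exp (-x)/6) atTop (nhds 0) := by
        have := ((nexp.add nxexp).add ((npow 2).div_const 2)).add ((npow 3).div_const 6)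
        simpa using this
      have t : Tendsto (fun x:ℝ => (6+6*x+3*x^2+x^3)*Real.exp (-x)/6) atTop (nhds 0) := by
        apply Tendsto.congr (fun x => by ring) base
      have := (ofReal_tendsto_zero t).const_mul γ
      simpa using this
    · intro x hx
      have k := key' x hx
      push_cast at k ⊢
      linear_combination k / 6
  exact ⟨rfl, rfl, hγ⟩

theorem stmt_5 :
    ¬ ∃ (c₂ c₅ c₆ : ℂ) (b₂ b₅ b₆ ψ₅ ψ₆ : ℂ → ℂ),
      (∀ z : ℂ, b₂ z * c₂ + b₅ z * c₅ + b₆ z * c₆ = phi 2 z) ∧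
      (∀ z : ℂ, b₂ z * c₂ ^ 2 + b₅ z * c₅ ^ 2 + b₆ z * c₆ ^ 2 = 2 * phi 3 z) ∧
      (∀ z : ℂ, b₂ z * c₂ ^ 3 + b₅ z * c₅ ^ 3 + b₆ z * c₆ ^ 3 = 6 * phi 4 z) ∧
      (∀ mu nu : ℂ, -c₂ ^ 2 * b₂ mu * phi 2 (c₂ * nu) + b₅ mu * ψ₅ nu + b₆ mu * ψ₆ nu = 0) := by
  rintro ⟨c₂, c₅, c₆, b₂, b₅, b₆, ψ₅, ψ₆, h1, h2, h3, h4⟩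
  obtain ⟨A, B, C, D, E, F, hw⟩ : ∃ A B C D E F : ℂ, ∀ z : ℂ,
      phi 2 z = b₅ z * A + b₆ z * D ∧
      2 * phi 3 z = b₅ z * B + b₆ z * E ∧
      6 * phi 4 z = b₅ z * C + b₆ z * F := by
    by_cases hc : c₂ = 0
    · subst hc
      exact ⟨c₅, c₅^2, c₅^3, c₆, c₆^2, c₆^3, fun z =>
        ⟨by linear_combination - h1 z, by linear_combination - h2 z, by linear_combination - h3 z⟩⟩
    · have hb2 : ∀ μ : ℂ, b₂ μ = b₅ μ * (2 * ψ₅ 0 / c₂^2) + b₆ μ * (2 * ψ₆ 0 / c₂^2) := by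
        intro μ
        have h := h4 μ 0
        rw [mul_zero, phi_two_zero] at h
        field_simp [hc]
        linear_combination (-2) * h
      refine ⟨2 * ψ₅ 0 / c₂^2 * c₂ + c₅, 2 * ψ₅ 0 / c₂^2 * c₂^2 + c₅^2,
              2 * ψ₅ 0 / c₂^2 * c₂^3 + c₅^3,
              2 * ψ₆ 0 / c₂^2 * c₂ + c₆, 2 * ψ₆ 0 / c₂^2 * c₂^2 + c₆^2,
              2 * ψ₆ 0 / c₂^2 * c₂^3 + c₆^3, fun z => ⟨?_, ?_, ?_⟩⟩
      · rw [← h1 z, hb2 z]; ring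
      · rw [← h2 z, hb2 z]; ring
      · rw [← h3 z, hb2 z]; ring
  have hdet : ∀ x y z : ℂ,
      ((2*phi 3 x) * (6*phi 4 y) - (6*phi 4 x) * (2*phi 3 y)) * phi 2 z
      + ((6*phi 4 x) * (phi 2 y) - (phi 2 x) * (6*phi 4 y)) * (2 * phi 3 z)
      + ((phi 2 x) * (2*phi 3 y) - (2*phi 3 x) * (phi 2 y)) * (6 * phi 4 z) = 0 := by
    intro x y z
    obtain ⟨px, qx, rx⟩ := hw x
    obtain ⟨py, qy, ry⟩ := hw y
    obtain ⟨pz, qz, rz⟩ := hw z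
    rw [px, qx, rx, py, qy, ry, pz, qz, rz]
    ring
  have hc3 : ∀ x y : ℂ, phi 2 x * (2*phi 3 y) - (2*phi 3 x) * (phi 2 y) = 0 := by
    intro x y
    exact (lin_indep ((2*phi 3 x) * (6*phi 4 y) - (6*phi 4 x) * (2*phi 3 y))
      ((6*phi 4 x) * (phi 2 y) - (phi 2 x) * (6*phi 4 y))
      ((phi 2 x) * (2*phi 3 y) - (2*phi 3 x) * (phi 2 y))
      (fun z => by linear_combination hdet x y z)).2.2
  have h20 : ∀ y : ℂ, phi 2 y = 0 := by
    intro y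
    have := (lin_indep (2*phi 3 y) (-(phi 2 y)) 0
      (fun x => by linear_combination hc3 x y)).2.1
    exact neg_eq_zero.mp this
  have : (1:ℂ) = 0 := (lin_indep 1 0 0 (fun z => by rw [h20 z]; ring)).1
  exact one_ne_zero this
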